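/- (Truncated Neumann series approximation of the inverted empirical operators.) Let Ω be a Polish space, c ∈ L^∞(Ω×Ω) a bounded Borel-measurable cost, and P, Q Borel probability measures on Ω, with samples of sizes n and m. Set δ(c) := 1 − exp(−3‖c‖_∞) ∈ (0,1). Then, deterministically, for all n, m, N ∈ ℕ and all κ ∈ ℝ: sup over f ∈ L²_0(P_n) with ‖f‖_{L²(P_n)} ≤ 1 of ‖ Σ_{k=0}^N (A_{Q_m}A_{P_n})^k (f + κ·1) − (I_{L²(P_n)} − A_{Q_m}Ā_{P_n})⁻¹ (f + κ·1) ‖_{L²(P_n)} ≤ δ(c)^{N+1}/(1 − δ(c)) + N·|κ|, and sup over g ∈ L²_0(Q_m) with ‖g‖_{L²(Q_m)} ≤ 1 of ‖ Σ_{k=0}^N (A_{P_n}A_{Q_m})^k (g + κ·1) − (I_{L²_0(Q_m)} − Ā_{P_n}A_{Q_m})⁻¹ (g) ‖_{L²(Q_m)} ≤ δ(c)^{N+1}/(1 − δ(c)) + (N+1)·|κ|. -/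

import Mathlib

open MeasureTheory ProbabilityTheory Filter
open scoped ENNReal NNReal Topology

noncomputable section

namespace EOT

variable {Ω : Type*} [MeasurableSpace Ω]

/-- Empirical measure of the first `n` samples `X 0, …, X (n-1)` at outcome `θ`. -/
def empMeas {Θ : Type*} (X : ℕ → Θ → Ω) (n : ℕ) (θ : Θ) : Measure Ω :=
  (n : ℝ≥0∞)⁻¹ • ∑ i ∈ Finset.range n, Measure.dirac (X i θ)

/-- The Schrödinger system characterizing the dual entropic optimal transport potentials
(regularization parameter 1) for the cost `c` between `P` and `Q`. -/
def SchrodingerSystem (c : Ω × Ω → ℝ) (P Q : Measure Ω) (f g : Ω → ℝ) : Prop :=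
  (∀ x, f x = - Real.log (∫ y, Real.exp (g y - c (x, y)) ∂Q)) ∧
  (∀ y, g y = - Real.log (∫ x, Real.exp (f x - c (x, y)) ∂P))

/-- Density of the entropic optimal transport plan w.r.t. `P ⊗ Q`, built from dual
potentials `f`, `g`: `ξ(x,y) = exp (f x + g y - c (x,y))`. -/
def eotDensity (c : Ω × Ω → ℝ) (f g : Ω → ℝ) : Ω × Ω → ℝ :=
  fun p => Real.exp (f p.1 + g p.2 - c p)

/-- Kernel operator `A_P`: `(A_P f)(y) = ∫ ξ(x,y) f(x) dP(x)`. -/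
def opAP (P : Measure Ω) (ξ : Ω × Ω → ℝ) (f : Ω → ℝ) : Ω → ℝ :=
  fun y => ∫ x, ξ (x, y) * f x ∂P

/-- Kernel operator `A_Q`: `(A_Q g)(x) = ∫ ξ(x,y) g(y) dQ(y)`. -/
def opAQ (Q : Measure Ω) (ξ : Ω × Ω → ℝ) (g : Ω → ℝ) : Ω → ℝ :=
  fun x => ∫ y, ξ (x, y) * g y ∂Q

/-- `η_x(x) = ∫ η(x,y) ξ(x,y) dQ(y)`. -/
def etaX (Q : Measure Ω) (ξ η : Ω × Ω → ℝ) : Ω → ℝ :=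
  fun x => ∫ y, η (x, y) * ξ (x, y) ∂Q

/-- `η_y(y) = ∫ η(x,y) ξ(x,y) dP(x)`. -/
def etaY (P : Measure Ω) (ξ η : Ω × Ω → ℝ) : Ω → ℝ :=
  fun y => ∫ x, η (x, y) * ξ (x, y) ∂P

/-- Entropic optimal transport cost `S(P,Q)` (regularization parameter 1): the infimum,
over couplings `π` of `P` and `Q` which are absolutely continuous with respect to `P ⊗ Q`
with integrable log-density, of `∫ c dπ + KL(π ∥ P ⊗ Q)`. -/
def entropicCost (c : Ω × Ω → ℝ) (P Q : Measure Ω) : ℝ :=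
  sInf { r : ℝ | ∃ pi : Measure (Ω × Ω), IsProbabilityMeasure pi ∧
    pi.fst = P ∧ pi.snd = Q ∧ pi ≪ P.prod Q ∧
    Integrable (fun z => Real.log ((pi.rnDeriv (P.prod Q) z).toReal)) pi ∧
    r = ∫ z, c z ∂pi + ∫ z, Real.log ((pi.rnDeriv (P.prod Q) z).toReal) ∂pi }

/-- Convergence in distribution (weak convergence of the laws) of a sequence of
random variables with values in `E`. -/
def TendstoInDistribution {Θ E : Type*} [MeasurableSpace Θ] [MeasurableSpace E]
    [TopologicalSpace E] (Pr : Measure Θ) (W : ℕ → Θ → E) (μ : Measure E) : Prop :=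
  ∀ φ : BoundedContinuousFunction E ℝ,
    Tendsto (fun k => ∫ θ, φ (W k θ) ∂Pr) atTop (𝓝 (∫ x, φ x ∂μ))

/-- Convergence in probability to a constant. -/
def TendstoInProbability {Θ : Type*} [MeasurableSpace Θ]
    (Pr : Measure Θ) (W : ℕ → Θ → ℝ) (L : ℝ) : Prop :=
  ∀ ε : ℝ, 0 < ε → Tendsto (fun k => Pr {θ | ε < |W k θ - L|}) atTop (𝓝 (0 : ℝ≥0∞))

/-- `W = o_p(a)`: `W k / a k` tends to zero in probability. -/
def LittleOP {Θ : Type*} [MeasurableSpace Θ]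
    (Pr : Measure Θ) (W : ℕ → Θ → ℝ) (a : ℕ → ℝ) : Prop :=
  ∀ ε : ℝ, 0 < ε → Tendsto (fun k => Pr {θ | ε * a k < |W k θ|}) atTop (𝓝 (0 : ℝ≥0∞))

/-- `W = O_p(a)`: `W k / a k` is stochastically bounded. -/
def BigOP {Θ : Type*} [MeasurableSpace Θ]
    (Pr : Measure Θ) (W : ℕ → Θ → ℝ) (a : ℕ → ℝ) : Prop :=
  ∀ ε : ℝ, 0 < ε → ∃ C : ℝ, 0 < C ∧
    ∀ᶠ k in atTop, Pr {θ | C * a k < |W k θ|} < ENNReal.ofReal ε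

/-- Empirical (or population) `L²` norm of a function. -/
def l2norm (μ : Measure Ω) (h : Ω → ℝ) : ℝ := Real.sqrt (∫ x, (h x) ^ 2 ∂μ)

end EOT
namespace EOTAux

variable {Ω : Type*}

/-- discrete weighted sum standing for the empirical integral -/
def wsum (n : ℕ) (x : ℕ → Ω) (h : Ω → ℝ) : ℝ :=
  (n : ℝ)⁻¹ * ∑ i ∈ Finset.range n, h (x i)

/-- kernel operator in sum world -/
def kop (n : ℕ) (x : ℕ → Ω) (ξ : Ω → Ω → ℝ) (h : Ω → ℝ) : Ω → ℝ :=
  fun b => wsum n x fun a => ξ a b * h a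

def l2 (n : ℕ) (x : ℕ → Ω) (h : Ω → ℝ) : ℝ :=
  Real.sqrt (wsum n x fun a => h a ^ 2)

lemma wsum_add (n : ℕ) (x : ℕ → Ω) (h h' : Ω → ℝ) :
    wsum n x (fun a => h a + h' a) = wsum n x h + wsum n x h' := by
  simp [wsum, Finset.sum_add_distrib, mul_add]

lemma wsum_sub (n : ℕ) (x : ℕ → Ω) (h h' : Ω → ℝ) :
    wsum n x (fun a => h a - h' a) = wsum n x h - wsum n x h' := by
  simp [wsum, Finset.sum_sub_distrib, mul_sub]

lemma wsum_mul_left (n : ℕ) (x : ℕ → Ω) (r : ℝ) (h : Ω → ℝ) :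
    wsum n x (fun a => r * h a) = r * wsum n x h := by
  simp [wsum, ← Finset.mul_sum]; ring

lemma wsum_const (n : ℕ) (hn : 0 < n) (x : ℕ → Ω) (r : ℝ) :
    wsum n x (fun _ => r) = r := by
  have : (n : ℝ) ≠ 0 := Nat.cast_ne_zero.mpr hn.ne'
  simp [wsum]
  field_simp

lemma wsum_mono (n : ℕ) (x : ℕ → Ω) {h h' : Ω → ℝ} (hle : ∀ a, h a ≤ h' a) :
    wsum n x h ≤ wsum n x h' := by
  unfold wsum
  have : (0:ℝ) ≤ (n : ℝ)⁻¹ := by positivity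
  exact mul_le_mul_of_nonneg_left (Finset.sum_le_sum fun i _ => hle (x i)) this

lemma wsum_nonneg (n : ℕ) (x : ℕ → Ω) {h : Ω → ℝ} (h0 : ∀ a, 0 ≤ h a) :
    0 ≤ wsum n x h := by
  have := wsum_mono n x (h := fun _ => (0:ℝ)) (h' := h) h0
  simpa [wsum] using this

lemma wsum_pos (n : ℕ) (hn : 0 < n) (x : ℕ → Ω) {h : Ω → ℝ} (h0 : ∀ a, 0 < h a) :
    0 < wsum n x h := by
  unfold wsum
  have : (0:ℝ) < (n : ℝ)⁻¹ := by positivity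
  exact mul_pos this (Finset.sum_pos (fun i _ => h0 (x i)) (by simpa using hn.ne'))

lemma l2_nonneg (n : ℕ) (x : ℕ → Ω) (h : Ω → ℝ) : 0 ≤ l2 n x h := Real.sqrt_nonneg _

lemma l2_sq (n : ℕ) (x : ℕ → Ω) (h : Ω → ℝ) :
    l2 n x h ^ 2 = wsum n x fun a => h a ^ 2 :=
  Real.sq_sqrt (wsum_nonneg n x fun a => sq_nonneg _)

lemma wsum_le_l2_mul_l2 (n : ℕ) (x : ℕ → Ω) (u v : Ω → ℝ) :
    wsum n x (fun a => u a * v a) ≤ l2 n x u * l2 n x v := by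
  have cs : (∑ i ∈ Finset.range n, u (x i) * v (x i)) ^ 2 ≤
      (∑ i ∈ Finset.range n, u (x i) ^ 2) * ∑ i ∈ Finset.range n, v (x i) ^ 2 :=
    Finset.sum_mul_sq_le_sq_mul_sq _ _ _
  have h1 : wsum n x (fun a => u a * v a) ^ 2 ≤
      (wsum n x fun a => u a ^ 2) * wsum n x fun a => v a ^ 2 := by
    unfold wsum
    have hn2 : (0:ℝ) ≤ ((n:ℝ)⁻¹) ^ 2 := sq_nonneg _
    calc ((n : ℝ)⁻¹ * ∑ i ∈ Finset.range n, u (x i) * v (x i)) ^ 2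
        = ((n:ℝ)⁻¹)^2 * (∑ i ∈ Finset.range n, u (x i) * v (x i)) ^ 2 := by ring
      _ ≤ ((n:ℝ)⁻¹)^2 * ((∑ i ∈ Finset.range n, u (x i) ^ 2) *
            ∑ i ∈ Finset.range n, v (x i) ^ 2) := by
          exact mul_le_mul_of_nonneg_left cs hn2
      _ = ((n : ℝ)⁻¹ * ∑ i ∈ Finset.range n, u (x i) ^ 2) *
            ((n : ℝ)⁻¹ * ∑ i ∈ Finset.range n, v (x i) ^ 2) := by ring
  have h2 : (l2 n x u * l2 n x v) ^ 2 =
      (wsum n x fun a => u a ^ 2) * wsum n x fun a => v a ^ 2 := by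
    rw [mul_pow, l2_sq, l2_sq]
  have hb : 0 ≤ l2 n x u * l2 n x v := mul_nonneg (l2_nonneg n x u) (l2_nonneg n x v)
  nlinarith [h1, h2, hb]

lemma l2_triangle (n : ℕ) (x : ℕ → Ω) (u v : Ω → ℝ) :
    l2 n x (fun a => u a + v a) ≤ l2 n x u + l2 n x v := by
  have key : wsum n x (fun a => (u a + v a) ^ 2) ≤ (l2 n x u + l2 n x v) ^ 2 := by
    have e1 : wsum n x (fun a => (u a + v a) ^ 2)
        = wsum n x (fun a => u a ^ 2) + 2 * wsum n x (fun a => u a * v a)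
          + wsum n x (fun a => v a ^ 2) := by
      have : (fun a => (u a + v a) ^ 2)
          = fun a => (u a ^ 2 + (2 * (u a * v a) + v a ^ 2)) := by funext a; ring
      rw [this, wsum_add, wsum_add, wsum_mul_left]; ring
    have e2 := wsum_le_l2_mul_l2 n x u v
    have := l2_sq n x u; have := l2_sq n x v
    nlinarith [e1, e2]
  have h0 : 0 ≤ l2 n x u + l2 n x v :=
    add_nonneg (l2_nonneg n x u) (l2_nonneg n x v)
  calc l2 n x (fun a => u a + v a) = Real.sqrt (wsum n x fun a => (u a + v a) ^ 2) := rfl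
    _ ≤ Real.sqrt ((l2 n x u + l2 n x v) ^ 2) := Real.sqrt_le_sqrt key
    _ = l2 n x u + l2 n x v := by rw [Real.sqrt_sq h0]

lemma l2_const (n : ℕ) (hn : 0 < n) (x : ℕ → Ω) (r : ℝ) :
    l2 n x (fun _ => r) = |r| := by
  rw [l2, wsum_const n hn, Real.sqrt_sq_eq_abs]

lemma l2_congr (n : ℕ) (x : ℕ → Ω) {u v : Ω → ℝ} (h : ∀ a, u a = v a) :
    l2 n x u = l2 n x v := by
  have : u = v := funext h
  rw [this]

lemma l2_neg (n : ℕ) (x : ℕ → Ω) (u : Ω → ℝ) :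
    l2 n x (fun a => -u a) = l2 n x u := by
  unfold l2
  congr 1
  apply congrArg
  funext a
  ring

lemma raw_core (n m : ℕ) (Ξ : ℕ → ℕ → ℝ) (F Φ : ℕ → ℝ) (β ε : ℝ)
    (hβ : 0 ≤ β) (hε : 0 ≤ ε)
    (hrow : ∀ j ∈ Finset.range m, ∑ i ∈ Finset.range n, Ξ i j = n)
    (hcol : ∀ i ∈ Finset.range n, ∑ j ∈ Finset.range m, Ξ i j = m)
    (hfloor : ∀ i ∈ Finset.range n, ∀ j ∈ Finset.range m, β * Φ i ≤ Ξ i j)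
    (hΦ : ∀ i ∈ Finset.range n, ε ≤ Φ i)
    (hΦ1 : ∑ i ∈ Finset.range n, Φ i = n)
    (hmean : ∑ i ∈ Finset.range n, F i = 0) :
    ∑ j ∈ Finset.range m, (∑ i ∈ Finset.range n, Ξ i j * F i) ^ 2
      ≤ (1 - (β * ε + β) / 2) * ((m : ℝ) * n) * ∑ i ∈ Finset.range n, F i ^ 2 := by
  classical
  set s := Finset.range n
  set t := Finset.range m
  have hΞ0 : ∀ i ∈ s, ∀ j ∈ t, 0 ≤ Ξ i j := fun i hi j hj =>
    le_trans (mul_nonneg hβ (le_trans hε (hΦ i hi))) (hfloor i hi j hj)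
  set K : ℕ → ℕ → ℝ := fun i i' => ∑ j ∈ t, Ξ i j * Ξ i' j with hK
  set R : ℕ → ℕ → ℝ := fun i i' => K i i' - (m : ℝ) * β / 2 * (Φ i + Φ i') with hR
  -- Step 1: expansion
  have step1 : ∑ j ∈ t, (∑ i ∈ s, Ξ i j * F i) ^ 2
      = ∑ i ∈ s, ∑ i' ∈ s, K i i' * (F i * F i') := by
    have e1 : ∀ j, (∑ i ∈ s, Ξ i j * F i) ^ 2
        = ∑ i ∈ s, ∑ i' ∈ s, (Ξ i j * Ξ i' j) * (F i * F i') := by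
      intro j
      rw [sq, Finset.sum_mul_sum]
      exact Finset.sum_congr rfl fun i _ => Finset.sum_congr rfl fun i' _ => by ring
    calc ∑ j ∈ t, (∑ i ∈ s, Ξ i j * F i) ^ 2
        = ∑ j ∈ t, ∑ i ∈ s, ∑ i' ∈ s, (Ξ i j * Ξ i' j) * (F i * F i') :=
          Finset.sum_congr rfl fun j _ => e1 j
      _ = ∑ i ∈ s, ∑ j ∈ t, ∑ i' ∈ s, (Ξ i j * Ξ i' j) * (F i * F i') := Finset.sum_comm
      _ = ∑ i ∈ s, ∑ i' ∈ s, ∑ j ∈ t, (Ξ i j * Ξ i' j) * (F i * F i') :=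
          Finset.sum_congr rfl fun i _ => Finset.sum_comm
      _ = ∑ i ∈ s, ∑ i' ∈ s, K i i' * (F i * F i') := by
          refine Finset.sum_congr rfl fun i _ => Finset.sum_congr rfl fun i' _ => ?_
          rw [hK, Finset.sum_mul]
  -- Floor for K
  have hKfloor : ∀ i ∈ s, ∀ i' ∈ s, (m:ℝ) * β / 2 * (Φ i + Φ i') ≤ K i i' := by
    have h1 : ∀ i ∈ s, ∀ i' ∈ s, (m:ℝ) * (β * Φ i) ≤ K i i' := by
      intro i hi i' hi'
      have hstep : ∀ j ∈ t, (β * Φ i) * Ξ i' j ≤ Ξ i j * Ξ i' j := fun j hj =>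
        mul_le_mul_of_nonneg_right (hfloor i hi j hj) (hΞ0 i' hi' j hj)
      calc (m:ℝ) * (β * Φ i) = (β * Φ i) * ∑ j ∈ t, Ξ i' j := by
            rw [hcol i' hi']; ring
        _ = ∑ j ∈ t, (β * Φ i) * Ξ i' j := by rw [Finset.mul_sum]
        _ ≤ ∑ j ∈ t, Ξ i j * Ξ i' j := Finset.sum_le_sum hstep
        _ = K i i' := rfl
    intro i hi i' hi'
    have hKsymm : K i' i = K i i' := by
      rw [hK]
      exact Finset.sum_congr rfl fun j _ => mul_comm _ _
    have a1 := h1 i hi i' hi'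
    have a2 := h1 i' hi' i hi
    rw [hKsymm] at a2
    linarith
  have hR0 : ∀ i ∈ s, ∀ i' ∈ s, 0 ≤ R i i' := by
    intro i hi i' hi'
    have := hKfloor i hi i' hi'
    simp only [hR]
    linarith
  have hRsymm : ∀ i ∈ s, ∀ i' ∈ s, R i' i = R i i' := by
    intro i hi i' hi'
    simp only [hR, hK]
    have : ∑ j ∈ t, Ξ i' j * Ξ i j = ∑ j ∈ t, Ξ i j * Ξ i' j :=
      Finset.sum_congr rfl fun j _ => mul_comm _ _
    rw [this]; ring
  -- cross terms vanish
  have z1 : ∑ i ∈ s, ∑ i' ∈ s, Φ i * (F i * F i') = 0 := by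
    have e : ∀ i, ∑ i' ∈ s, Φ i * (F i * F i') = Φ i * F i * ∑ i' ∈ s, F i' := by
      intro i
      rw [Finset.mul_sum]
      exact Finset.sum_congr rfl fun i' _ => by ring
    rw [Finset.sum_congr rfl fun i _ => e i]
    simp [hmean]
  have z2 : ∑ i ∈ s, ∑ i' ∈ s, Φ i' * (F i * F i') = 0 := by
    have e : ∀ i, ∑ i' ∈ s, Φ i' * (F i * F i') = F i * ∑ i' ∈ s, Φ i' * F i' := by
      intro i
      rw [Finset.mul_sum]
      exact Finset.sum_congr rfl fun i' _ => by ring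
    rw [Finset.sum_congr rfl fun i _ => e i, ← Finset.sum_mul]
    rw [hmean]
    ring
  have step2 : ∑ i ∈ s, ∑ i' ∈ s, K i i' * (F i * F i')
      = ∑ i ∈ s, ∑ i' ∈ s, R i i' * (F i * F i') := by
    have e : ∀ i ∈ s, ∀ i' ∈ s, K i i' * (F i * F i')
        = R i i' * (F i * F i')
          + (m:ℝ) * β / 2 * (Φ i * (F i * F i')) + (m:ℝ) * β / 2 * (Φ i' * (F i * F i')) := by
      intro i _ i' _
      simp only [hR]
      ring
    calc ∑ i ∈ s, ∑ i' ∈ s, K i i' * (F i * F i')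
        = ∑ i ∈ s, ∑ i' ∈ s, (R i i' * (F i * F i')
            + (m:ℝ) * β / 2 * (Φ i * (F i * F i')) + (m:ℝ) * β / 2 * (Φ i' * (F i * F i'))) := by
          refine Finset.sum_congr rfl fun i hi => Finset.sum_congr rfl fun i' hi' => ?_
          exact e i hi i' hi'
      _ = ∑ i ∈ s, ∑ i' ∈ s, R i i' * (F i * F i')
            + (m:ℝ) * β / 2 * (∑ i ∈ s, ∑ i' ∈ s, Φ i * (F i * F i'))
            + (m:ℝ) * β / 2 * (∑ i ∈ s, ∑ i' ∈ s, Φ i' * (F i * F i')) := by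
          simp only [Finset.sum_add_distrib, Finset.mul_sum]
      _ = ∑ i ∈ s, ∑ i' ∈ s, R i i' * (F i * F i') := by
          rw [z1, z2]; ring
  -- bound by diagonal
  have step3 : ∑ i ∈ s, ∑ i' ∈ s, R i i' * (F i * F i')
      ≤ ∑ i ∈ s, ∑ i' ∈ s, R i i' * ((F i ^ 2 + F i' ^ 2) / 2) := by
    refine Finset.sum_le_sum fun i hi => Finset.sum_le_sum fun i' hi' => ?_
    refine mul_le_mul_of_nonneg_left ?_ (hR0 i hi i' hi')
    nlinarith [sq_nonneg (F i - F i')]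
  have step4 : ∑ i ∈ s, ∑ i' ∈ s, R i i' * ((F i ^ 2 + F i' ^ 2) / 2)
      = ∑ i ∈ s, (∑ i' ∈ s, R i i') * F i ^ 2 := by
    have esum : ∑ i ∈ s, ∑ i' ∈ s, R i i' * (F i' ^ 2 / 2)
        = ∑ i ∈ s, ∑ i' ∈ s, R i i' * (F i ^ 2 / 2) := by
      rw [Finset.sum_comm]
      refine Finset.sum_congr rfl fun i hi => Finset.sum_congr rfl fun i' hi' => ?_
      rw [hRsymm i' hi' i hi]
    calc ∑ i ∈ s, ∑ i' ∈ s, R i i' * ((F i ^ 2 + F i' ^ 2) / 2)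
        = ∑ i ∈ s, ∑ i' ∈ s, (R i i' * (F i ^ 2 / 2) + R i i' * (F i' ^ 2 / 2)) := by
          refine Finset.sum_congr rfl fun i _ => Finset.sum_congr rfl fun i' _ => by ring
      _ = ∑ i ∈ s, ∑ i' ∈ s, R i i' * (F i ^ 2 / 2)
            + ∑ i ∈ s, ∑ i' ∈ s, R i i' * (F i' ^ 2 / 2) := by
          simp [Finset.sum_add_distrib]
      _ = 2 * ∑ i ∈ s, ∑ i' ∈ s, R i i' * (F i ^ 2 / 2) := by rw [esum]; ring
      _ = ∑ i ∈ s, (∑ i' ∈ s, R i i') * F i ^ 2 := by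
          rw [Finset.mul_sum]
          refine Finset.sum_congr rfl fun i _ => ?_
          rw [Finset.mul_sum, Finset.sum_mul]
          refine Finset.sum_congr rfl fun i' _ => by ring
  -- row sums of R
  have hrowR : ∀ i ∈ s, ∑ i' ∈ s, R i i' = (m:ℝ) * n * (1 - β * (Φ i + 1) / 2) := by
    intro i hi
    have hKrow : ∑ i' ∈ s, K i i' = (n:ℝ) * m := by
      calc ∑ i' ∈ s, K i i' = ∑ i' ∈ s, ∑ j ∈ t, Ξ i j * Ξ i' j := rfl
        _ = ∑ j ∈ t, ∑ i' ∈ s, Ξ i j * Ξ i' j := Finset.sum_comm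
        _ = ∑ j ∈ t, Ξ i j * ∑ i' ∈ s, Ξ i' j := by
            exact Finset.sum_congr rfl fun j _ => (Finset.mul_sum _ _ _).symm
        _ = ∑ j ∈ t, Ξ i j * n := by
            exact Finset.sum_congr rfl fun j hj => by rw [hrow j hj]
        _ = (∑ j ∈ t, Ξ i j) * n := by rw [Finset.sum_mul]
        _ = (m:ℝ) * n := by rw [hcol i hi]
        _ = (n:ℝ) * m := by ring
    have hcard : (s.card : ℝ) = n := by simp [s]
    calc ∑ i' ∈ s, R i i'
        = ∑ i' ∈ s, K i i' - ∑ i' ∈ s, (m:ℝ) * β / 2 * (Φ i + Φ i') := by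
          rw [← Finset.sum_sub_distrib]
      _ = (n:ℝ) * m - ((m:ℝ) * β / 2 * (s.card * Φ i + ∑ i' ∈ s, Φ i')) := by
          rw [hKrow]
          congr 1
          simp only [mul_add, Finset.sum_add_distrib, Finset.sum_const, nsmul_eq_mul,
            Finset.mul_sum]
          ring
      _ = (n:ℝ) * m - ((m:ℝ) * β / 2 * ((n:ℝ) * Φ i + (n:ℝ))) := by rw [hcard, hΦ1]
      _ = (m:ℝ) * n * (1 - β * (Φ i + 1) / 2) := by ring
  -- final bound
  have step5 : ∑ i ∈ s, (∑ i' ∈ s, R i i') * F i ^ 2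
      ≤ (1 - (β * ε + β) / 2) * ((m:ℝ) * n) * ∑ i ∈ s, F i ^ 2 := by
    rw [Finset.mul_sum]
    refine Finset.sum_le_sum fun i hi => ?_
    rw [hrowR i hi]
    have h1 : (m:ℝ) * n * (1 - β * (Φ i + 1) / 2) ≤ (1 - (β * ε + β) / 2) * ((m:ℝ) * n) := by
      have hmn : (0:ℝ) ≤ (m:ℝ) * n := by positivity
      have : 1 - β * (Φ i + 1) / 2 ≤ 1 - (β * ε + β) / 2 := by
        have := hΦ i hi
        nlinarith
      nlinarith
    exact mul_le_mul_of_nonneg_right h1 (sq_nonneg _)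
  calc ∑ j ∈ t, (∑ i ∈ s, Ξ i j * F i) ^ 2
      = ∑ i ∈ s, ∑ i' ∈ s, K i i' * (F i * F i') := step1
    _ = ∑ i ∈ s, ∑ i' ∈ s, R i i' * (F i * F i') := step2
    _ ≤ ∑ i ∈ s, ∑ i' ∈ s, R i i' * ((F i ^ 2 + F i' ^ 2) / 2) := step3
    _ = ∑ i ∈ s, (∑ i' ∈ s, R i i') * F i ^ 2 := step4
    _ ≤ (1 - (β * ε + β) / 2) * ((m:ℝ) * n) * ∑ i ∈ s, F i ^ 2 := step5

-- PART3
lemma quad_contraction (n m : ℕ) (hn : 0 < n) (hm : 0 < m) (x y : ℕ → Ω) (ξ : Ω → Ω → ℝ)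
    (φ : Ω → ℝ) (β ε : ℝ) (hβ : 0 ≤ β) (hε : 0 ≤ ε)
    (hrow : ∀ b, wsum n x (fun a => ξ a b) = 1)
    (hcol : ∀ a, wsum m y (fun b => ξ a b) = 1)
    (hfloor : ∀ a b, β * φ a ≤ ξ a b)
    (hφ : ∀ a, ε ≤ φ a) (hφ1 : wsum n x φ = 1)
    (h : Ω → ℝ) (hmean : wsum n x h = 0) :
    wsum m y (fun b => (kop n x ξ h b) ^ 2)
      ≤ (1 - (β * ε + β) / 2) * wsum n x (fun a => h a ^ 2) := by
  have hn0 : ((n:ℝ)) ≠ 0 := Nat.cast_ne_zero.mpr hn.ne'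
  have hm0 : ((m:ℝ)) ≠ 0 := Nat.cast_ne_zero.mpr hm.ne'
  set Ξ : ℕ → ℕ → ℝ := fun i j => ξ (x i) (y j) with hΞ
  set F : ℕ → ℝ := fun i => h (x i) with hF
  set Φ : ℕ → ℝ := fun i => φ (x i) with hΦdef
  have rowr : ∀ j ∈ Finset.range m, ∑ i ∈ Finset.range n, Ξ i j = (n:ℝ) := by
    intro j _
    have := hrow (y j)
    unfold wsum at this
    field_simp at this
    linarith
  have colr : ∀ i ∈ Finset.range n, ∑ j ∈ Finset.range m, Ξ i j = (m:ℝ) := by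
    intro i _
    have := hcol (x i)
    unfold wsum at this
    field_simp at this
    linarith
  have floorr : ∀ i ∈ Finset.range n, ∀ j ∈ Finset.range m, β * Φ i ≤ Ξ i j :=
    fun i _ j _ => hfloor (x i) (y j)
  have Φr : ∀ i ∈ Finset.range n, ε ≤ Φ i := fun i _ => hφ (x i)
  have Φ1r : ∑ i ∈ Finset.range n, Φ i = (n:ℝ) := by
    have := hφ1
    unfold wsum at this
    field_simp at this
    linarith
  have meanr : ∑ i ∈ Finset.range n, F i = 0 := by
    have := hmean
    unfold wsum at this
    rcases mul_eq_zero.mp this with h' | h'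
    · exact absurd h' (inv_ne_zero hn0)
    · exact h'
  have key := raw_core n m Ξ F Φ β ε hβ hε rowr colr floorr Φr Φ1r meanr
  have lhs_eq : wsum m y (fun b => (kop n x ξ h b) ^ 2)
      = (m:ℝ)⁻¹ * ∑ j ∈ Finset.range m,
          ((n:ℝ)⁻¹ * ∑ i ∈ Finset.range n, Ξ i j * F i) ^ 2 := rfl
  have rhs_eq : wsum n x (fun a => h a ^ 2)
      = (n:ℝ)⁻¹ * ∑ i ∈ Finset.range n, F i ^ 2 := rfl
  rw [lhs_eq, rhs_eq]
  have e2 : ∑ j ∈ Finset.range m, ((n:ℝ)⁻¹ * ∑ i ∈ Finset.range n, Ξ i j * F i) ^ 2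
      = ((n:ℝ)⁻¹) ^ 2 * ∑ j ∈ Finset.range m, (∑ i ∈ Finset.range n, Ξ i j * F i) ^ 2 := by
    rw [Finset.mul_sum]
    exact Finset.sum_congr rfl fun j _ => by ring
  rw [e2]
  have hpos : (0:ℝ) ≤ (m:ℝ)⁻¹ * ((n:ℝ)⁻¹) ^ 2 := by positivity
  calc (m:ℝ)⁻¹ * (((n:ℝ)⁻¹) ^ 2 * ∑ j ∈ Finset.range m, (∑ i ∈ Finset.range n, Ξ i j * F i) ^ 2)
      ≤ (m:ℝ)⁻¹ * (((n:ℝ)⁻¹) ^ 2 *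
          ((1 - (β * ε + β) / 2) * ((m : ℝ) * n) * ∑ i ∈ Finset.range n, F i ^ 2)) := by
        have h2 : (0:ℝ) ≤ (m:ℝ)⁻¹ := by positivity
        have h3 : (0:ℝ) ≤ ((n:ℝ)⁻¹) ^ 2 := by positivity
        exact mul_le_mul_of_nonneg_left (mul_le_mul_of_nonneg_left key h3) h2
    _ = (1 - (β * ε + β) / 2) * ((n:ℝ)⁻¹ * ∑ i ∈ Finset.range n, F i ^ 2) := by
        field_simp
-- PART4
lemma wsum_congr (n : ℕ) (x : ℕ → Ω) {u v : Ω → ℝ} (h : ∀ a, u a = v a) :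
    wsum n x u = wsum n x v := by rw [funext h]

lemma wsum_mul_right (n : ℕ) (x : ℕ → Ω) (r : ℝ) (h : Ω → ℝ) :
    wsum n x (fun a => h a * r) = wsum n x h * r := by
  rw [wsum_congr n x (fun a => mul_comm (h a) r), wsum_mul_left]
  ring

lemma wsum_wsum_comm (n m : ℕ) (x y : ℕ → Ω) (Fk : Ω → Ω → ℝ) :
    wsum m y (fun b => wsum n x (fun a => Fk a b))
      = wsum n x (fun a => wsum m y (fun b => Fk a b)) := by
  unfold wsum
  simp only [Finset.mul_sum]
  rw [Finset.sum_comm]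
  exact Finset.sum_congr rfl fun i _ => Finset.sum_congr rfl fun j _ => by ring

/-- Hypothesis bundle for the doubly-stochastic kernel with a Doeblin-type floor. -/
structure Good (n m : ℕ) (x y : ℕ → Ω) (ξ : Ω → Ω → ℝ) (β ε : ℝ) : Prop where
  hn : 0 < n
  hm : 0 < m
  hβ0 : 0 < β
  hβ1 : β ≤ 1
  hε0 : 0 < ε
  hε1 : ε ≤ 1
  row : ∀ b, wsum n x (fun a => ξ a b) = 1
  col : ∀ a, wsum m y (fun b => ξ a b) = 1
  floor : ∃ φ : Ω → ℝ, (∀ a b, β * φ a ≤ ξ a b) ∧ (∀ a, ε ≤ φ a) ∧ wsum n x φ = 1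

/-- the composed operator `A_Q ∘ A_P` in sum world -/
def Top (n m : ℕ) (x y : ℕ → Ω) (ξ : Ω → Ω → ℝ) (h : Ω → ℝ) : Ω → ℝ :=
  kop m y (fun b a => ξ a b) (kop n x ξ h)

/-- integrating `A_P h` against the second marginal recovers the mean of `h`. -/
lemma mean_kop (n m : ℕ) (x y : ℕ → Ω) (ξ : Ω → Ω → ℝ)
    (hcol : ∀ a, wsum m y (fun b => ξ a b) = 1) (h : Ω → ℝ) :
    wsum m y (kop n x ξ h) = wsum n x h := by
  unfold kop
  rw [wsum_wsum_comm]
  refine wsum_congr n x fun a => ?_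
  calc wsum m y (fun b => ξ a b * h a) = wsum m y (fun b => ξ a b) * h a :=
        wsum_mul_right m y (h a) _
    _ = h a := by rw [hcol a, one_mul]

lemma swap_id (n m : ℕ) (x y : ℕ → Ω) (ξ : Ω → Ω → ℝ) (w h : Ω → ℝ) :
    wsum n x (fun a => kop m y (fun b a' => ξ a' b) w a * h a)
      = wsum m y (fun b => w b * kop n x ξ h b) := by
  unfold kop
  have e1 : ∀ a, wsum m y (fun b => ξ a b * w b) * h a
      = wsum m y (fun b => ξ a b * w b * h a) :=
    fun a => (wsum_mul_right m y (h a) _).symm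
  rw [wsum_congr n x e1, ← wsum_wsum_comm]
  refine wsum_congr m y fun b => ?_
  calc wsum n x (fun a => ξ a b * w b * h a)
      = wsum n x (fun a => w b * (ξ a b * h a)) :=
        wsum_congr n x fun a => by ring
    _ = w b * wsum n x (fun a => ξ a b * h a) := wsum_mul_left n x _ _
-- PART5
namespace Good

variable {n m : ℕ} {x y : ℕ → Ω} {ξ : Ω → Ω → ℝ} {β ε : ℝ}

lemma lam_nonneg (G : Good n m x y ξ β ε) : 0 ≤ 1 - (β * ε + β) / 2 := by
  have := G.hβ0; have := G.hβ1; have := G.hε0; have := G.hε1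
  nlinarith

lemma lam_lt_one (G : Good n m x y ξ β ε) : 1 - (β * ε + β) / 2 < 1 := by
  have := G.hβ0; have := G.hε0
  nlinarith

lemma quad (G : Good n m x y ξ β ε) (h : Ω → ℝ) (hmean : wsum n x h = 0) :
    wsum m y (fun b => (kop n x ξ h b) ^ 2)
      ≤ (1 - (β * ε + β) / 2) * wsum n x (fun a => h a ^ 2) := by
  obtain ⟨φ, h1, h2, h3⟩ := G.floor
  exact quad_contraction n m G.hn G.hm x y ξ φ β ε G.hβ0.le G.hε0.le G.row G.col h1 h2 h3 h hmean

lemma mean_T (G : Good n m x y ξ β ε) (h : Ω → ℝ) :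
    wsum n x (Top n m x y ξ h) = wsum n x h := by
  unfold Top
  rw [mean_kop m n y x _ (fun b => G.row b) (kop n x ξ h)]
  exact mean_kop n m x y ξ G.col h

lemma l2_kop (G : Good n m x y ξ β ε) (h : Ω → ℝ) (hmean : wsum n x h = 0) :
    l2 m y (kop n x ξ h) ≤ Real.sqrt (1 - (β * ε + β) / 2) * l2 n x h := by
  have q := G.quad h hmean
  have e : Real.sqrt (1 - (β * ε + β) / 2) * l2 n x h
      = Real.sqrt ((1 - (β * ε + β) / 2) * wsum n x fun a => h a ^ 2) := by
    rw [Real.sqrt_mul G.lam_nonneg]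
    rfl
  rw [l2, e]
  exact Real.sqrt_le_sqrt q

lemma T_contract (G : Good n m x y ξ β ε) (h : Ω → ℝ) (hmean : wsum n x h = 0) :
    l2 n x (Top n m x y ξ h) ≤ (1 - (β * ε + β) / 2) * l2 n x h := by
  set lam := 1 - (β * ε + β) / 2 with hlam
  set w := kop n x ξ h with hw
  set Th := Top n m x y ξ h with hTh
  have hTmean : wsum n x Th = 0 := by rw [hTh, G.mean_T h, hmean]
  have hA : wsum n x (fun a => Th a * Th a) = wsum m y (fun b => w b * kop n x ξ Th b) :=
    swap_id n m x y ξ w Th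
  have hB : wsum m y (fun b => w b * kop n x ξ Th b)
      ≤ l2 m y w * l2 m y (kop n x ξ Th) := wsum_le_l2_mul_l2 m y _ _
  have hw1 : l2 m y w ≤ Real.sqrt lam * l2 n x h := G.l2_kop h hmean
  have hw2 : l2 m y (kop n x ξ Th) ≤ Real.sqrt lam * l2 n x Th := G.l2_kop Th hTmean
  have hsq : l2 n x Th ^ 2 = wsum n x (fun a => Th a * Th a) := by
    rw [l2_sq]
    exact wsum_congr n x fun a => (sq (Th a)).symm ▸ by ring
  have hl2w : 0 ≤ l2 m y w := l2_nonneg m y w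
  have hl2Th : 0 ≤ l2 n x Th := l2_nonneg n x Th
  have hl2h : 0 ≤ l2 n x h := l2_nonneg n x h
  have hslam : 0 ≤ Real.sqrt lam := Real.sqrt_nonneg _
  have hlam_sq : Real.sqrt lam * Real.sqrt lam = lam := Real.mul_self_sqrt G.lam_nonneg
  have key : l2 n x Th ^ 2 ≤ lam * l2 n x h * l2 n x Th := by
    calc l2 n x Th ^ 2 = wsum n x (fun a => Th a * Th a) := hsq
      _ ≤ l2 m y w * l2 m y (kop n x ξ Th) := le_trans (le_of_eq hA) hB
      _ ≤ (Real.sqrt lam * l2 n x h) * (Real.sqrt lam * l2 n x Th) := by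
          apply mul_le_mul hw1 hw2 (l2_nonneg m y _) (mul_nonneg hslam hl2h)
      _ = (Real.sqrt lam * Real.sqrt lam) * l2 n x h * l2 n x Th := by ring
      _ = lam * l2 n x h * l2 n x Th := by rw [hlam_sq]
  rcases eq_or_lt_of_le hl2Th with h0 | h0
  · rw [← h0]
    exact mul_nonneg G.lam_nonneg hl2h
  · nlinarith [key]

lemma T_iter_mean (G : Good n m x y ξ β ε) (h : Ω → ℝ) (hmean : wsum n x h = 0) :
    ∀ j, wsum n x ((Top n m x y ξ)^[j] h) = 0 := by
  intro j
  induction j with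
  | zero => simpa using hmean
  | succ j ih =>
      rw [Function.iterate_succ_apply', G.mean_T]
      exact ih

lemma T_iter_contract (G : Good n m x y ξ β ε) (h : Ω → ℝ) (hmean : wsum n x h = 0) :
    ∀ j, l2 n x ((Top n m x y ξ)^[j] h) ≤ (1 - (β * ε + β) / 2) ^ j * l2 n x h := by
  intro j
  induction j with
  | zero => simp
  | succ j ih =>
      rw [Function.iterate_succ_apply']
      calc l2 n x (Top n m x y ξ ((Top n m x y ξ)^[j] h))
          ≤ (1 - (β * ε + β) / 2) * l2 n x ((Top n m x y ξ)^[j] h) :=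
            G.T_contract _ (G.T_iter_mean h hmean j)
        _ ≤ (1 - (β * ε + β) / 2) * ((1 - (β * ε + β) / 2) ^ j * l2 n x h) :=
            mul_le_mul_of_nonneg_left ih G.lam_nonneg
        _ = (1 - (β * ε + β) / 2) ^ (j + 1) * l2 n x h := by ring

end Good
-- PART6
lemma kop_add (n : ℕ) (x : ℕ → Ω) (ξ : Ω → Ω → ℝ) (u v : Ω → ℝ) (b : Ω) :
    kop n x ξ (fun a => u a + v a) b = kop n x ξ u b + kop n x ξ v b := by
  unfold kop
  rw [← wsum_add]
  exact wsum_congr n x fun a => by ring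

lemma kop_sub (n : ℕ) (x : ℕ → Ω) (ξ : Ω → Ω → ℝ) (u v : Ω → ℝ) (b : Ω) :
    kop n x ξ (fun a => u a - v a) b = kop n x ξ u b - kop n x ξ v b := by
  unfold kop
  rw [← wsum_sub]
  exact wsum_congr n x fun a => by ring

lemma kop_const (n : ℕ) (x : ℕ → Ω) (ξ : Ω → Ω → ℝ) (r : ℝ) (b : Ω)
    (hrow : wsum n x (fun a => ξ a b) = 1) :
    kop n x ξ (fun _ => r) b = r := by
  unfold kop
  calc wsum n x (fun a => ξ a b * r) = wsum n x (fun a => ξ a b) * r :=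
        wsum_mul_right n x r _
    _ = r := by rw [hrow, one_mul]

namespace Good

variable {n m : ℕ} {x y : ℕ → Ω} {ξ : Ω → Ω → ℝ} {β ε : ℝ}

lemma T_addconst (G : Good n m x y ξ β ε) (u : Ω → ℝ) (r : ℝ) (a : Ω) :
    Top n m x y ξ (fun a' => u a' + r) a = Top n m x y ξ u a + r := by
  unfold Top
  have e1 : kop n x ξ (fun a' => u a' + r) = fun b => kop n x ξ u b + r := by
    funext b
    rw [kop_add n x ξ u (fun _ => r) b, kop_const n x ξ r b (G.row b)]
  rw [e1, kop_add m y _ (kop n x ξ u) (fun _ => r) a,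
    kop_const m y _ r a (G.col a)]

lemma T_sub (u v : Ω → ℝ) (a : Ω) :
    Top n m x y ξ (fun a' => u a' - v a') a = Top n m x y ξ u a - Top n m x y ξ v a := by
  unfold Top
  have e1 : kop n x ξ (fun a' => u a' - v a') = fun b => kop n x ξ u b - kop n x ξ v b := by
    funext b
    exact kop_sub n x ξ u v b
  rw [e1, kop_sub m y _ (kop n x ξ u) (kop n x ξ v) a]

lemma T_iter_addconst (G : Good n m x y ξ β ε) :
    ∀ (j : ℕ) (u : Ω → ℝ) (r : ℝ) (a : Ω),
      (Top n m x y ξ)^[j] (fun a' => u a' + r) a = (Top n m x y ξ)^[j] u a + r := by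
  intro j
  induction j with
  | zero => intro u r a; simp
  | succ j ih =>
      intro u r a
      rw [Function.iterate_succ_apply, Function.iterate_succ_apply]
      have e : Top n m x y ξ (fun a' => u a' + r) = fun a' => Top n m x y ξ u a' + r :=
        funext fun a' => G.T_addconst u r a'
      rw [e]
      exact ih (Top n m x y ξ u) r a

lemma T_iter_sub :
    ∀ (j : ℕ) (u v : Ω → ℝ) (a : Ω),
      (Top n m x y ξ)^[j] (fun a' => u a' - v a') a
        = (Top n m x y ξ)^[j] u a - (Top n m x y ξ)^[j] v a := by
  intro j
  induction j with
  | zero => intro u v a; simp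
  | succ j ih =>
      intro u v a
      rw [Function.iterate_succ_apply, Function.iterate_succ_apply,
        Function.iterate_succ_apply]
      have e : Top n m x y ξ (fun a' => u a' - v a') =
          fun a' => Top n m x y ξ u a' - Top n m x y ξ v a' :=
        funext fun a' => T_sub u v a'
      rw [e]
      exact ih (Top n m x y ξ u) (Top n m x y ξ v) a

/-- Main assembly: truncated Neumann series bound -/
lemma assembly (G : Good n m x y ξ β ε) (w base : Ω → ℝ)
    (hwmean : wsum n x w = 0) (hbase : l2 n x base ≤ 1)
    (heq : ∀ a, w a - Top n m x y ξ w a = base a) (N : ℕ) (κ s : ℝ) :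
    l2 n x (fun a =>
        (∑ j ∈ Finset.range (N + 1), (Top n m x y ξ)^[j] (fun a' => base a' + κ) a)
          - (w a + s))
      ≤ (1 - (β * ε + β) / 2) ^ (N + 1) / (1 - (1 - (β * ε + β) / 2))
          + |((N : ℝ) + 1) * κ - s| := by
  set T := Top n m x y ξ with hT
  set lam := 1 - (β * ε + β) / 2 with hlam
  have hlam0 : 0 ≤ lam := G.lam_nonneg
  have hlam1 : 0 < 1 - lam := by
    have h' := G.lam_lt_one
    rw [hlam]
    linarith
  -- telescoping identity
  have htele : ∀ (j : ℕ) (a : Ω), T^[j] base a = T^[j] w a - T^[j + 1] w a := by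
    intro j a
    have hb : base = fun a' => w a' - T w a' := funext fun a' => (heq a').symm
    rw [hb, T_iter_sub j w (T w) a, ← Function.iterate_succ_apply]
  have hsum : ∀ a : Ω,
      (∑ j ∈ Finset.range (N + 1), T^[j] (fun a' => base a' + κ) a)
        = w a - T^[N + 1] w a + ((N : ℝ) + 1) * κ := by
    intro a
    have e1 : ∀ j ∈ Finset.range (N + 1),
        T^[j] (fun a' => base a' + κ) a = (T^[j] w a - T^[j + 1] w a) + κ := by
      intro j _
      rw [G.T_iter_addconst j base κ a, htele j a]
    rw [Finset.sum_congr rfl e1, Finset.sum_add_distrib, Finset.sum_const,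
      Finset.card_range, Finset.sum_range_sub' (fun j => T^[j] w a)]
    simp only [Function.iterate_zero_apply, nsmul_eq_mul]
    push_cast
    ring
  -- rewrite target function
  have hfun : ∀ a : Ω,
      (∑ j ∈ Finset.range (N + 1), T^[j] (fun a' => base a' + κ) a) - (w a + s)
        = (fun a' => -(T^[N + 1] w a') + (((N : ℝ) + 1) * κ - s)) a := by
    intro a
    rw [hsum a]
    ring
  rw [l2_congr n x hfun]
  -- triangle inequality
  have htri : l2 n x (fun a => -(T^[N + 1] w a) + (((N : ℝ) + 1) * κ - s))
      ≤ l2 n x (fun a => -(T^[N + 1] w a)) + l2 n x (fun _ => ((N : ℝ) + 1) * κ - s) :=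
    l2_triangle n x _ _
  have hneg : l2 n x (fun a => -(T^[N + 1] w a)) = l2 n x (T^[N + 1] w) :=
    l2_neg n x _
  have hconst : l2 n x (fun _ : Ω => ((N : ℝ) + 1) * κ - s) = |((N : ℝ) + 1) * κ - s| :=
    l2_const n G.hn x _
  -- norm bound on w
  have hwnorm : l2 n x w ≤ 1 / (1 - lam) := by
    have e : ∀ a, w a = base a + T w a := fun a => by have := heq a; linarith
    have h1 : l2 n x w ≤ l2 n x base + l2 n x (T w) := by
      rw [l2_congr n x e]
      exact l2_triangle n x base (T w)
    have h2 : l2 n x (T w) ≤ lam * l2 n x w := G.T_contract w hwmean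
    have h3 : (1 - lam) * l2 n x w ≤ 1 := by linarith
    rw [le_div_iff₀ hlam1]
    linarith
  have hiterbound : l2 n x (T^[N + 1] w) ≤ lam ^ (N + 1) / (1 - lam) := by
    calc l2 n x (T^[N + 1] w) ≤ lam ^ (N + 1) * l2 n x w :=
          G.T_iter_contract w hwmean (N + 1)
      _ ≤ lam ^ (N + 1) * (1 / (1 - lam)) :=
          mul_le_mul_of_nonneg_left hwnorm (pow_nonneg hlam0 _)
      _ = lam ^ (N + 1) / (1 - lam) := by ring
  calc l2 n x (fun a => -(T^[N + 1] w a) + (((N : ℝ) + 1) * κ - s))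
      ≤ l2 n x (fun a => -(T^[N + 1] w a)) + l2 n x (fun _ => ((N : ℝ) + 1) * κ - s) := htri
    _ = l2 n x (T^[N + 1] w) + |((N : ℝ) + 1) * κ - s| := by rw [hneg, hconst]
    _ ≤ lam ^ (N + 1) / (1 - lam) + |((N : ℝ) + 1) * κ - s| := by
        exact add_le_add_left hiterbound _
end Good
-- PART7
lemma emp_integral [MeasurableSpace Ω] [MeasurableSingletonClass Ω]
    (n : ℕ) (x : ℕ → Ω) (h : Ω → ℝ) :
    ∫ a, h a ∂((n : ℝ≥0∞)⁻¹ • ∑ i ∈ Finset.range n, Measure.dirac (x i)) = wsum n x h := by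
  rw [integral_smul_measure, integral_finset_sum_measure (fun i _ =>
    ((integrable_const (h (x i))).congr (ae_eq_dirac h).symm))]
  simp only [integral_dirac]
  rw [wsum, smul_eq_mul]
  congr 1
  simp [ENNReal.toReal_inv]
-- PART8
lemma schrodinger_good [Nonempty Ω] (c : Ω × Ω → ℝ) (M : ℝ) (hM : ∀ p, |c p| ≤ M)
    (n m : ℕ) (hn : 0 < n) (hm : 0 < m) (x y : ℕ → Ω) (f0 g0 : Ω → ℝ)
    (hf : ∀ a, f0 a = - Real.log (wsum m y (fun b => Real.exp (g0 b - c (a, b)))))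
    (hg : ∀ b, g0 b = - Real.log (wsum n x (fun a => Real.exp (f0 a - c (a, b))))) :
    Good n m x y (fun a b => Real.exp (f0 a + g0 b - c (a, b)))
      (Real.exp (-(2 * M))) (Real.exp (-(2 * M))) := by
  have hM0 : 0 ≤ M := le_trans (abs_nonneg _) (hM (Classical.arbitrary _))
  have hβ1 : Real.exp (-(2 * M)) ≤ 1 := Real.exp_le_one_iff.mpr (by linarith)
  have hcb : ∀ p : Ω × Ω, -M ≤ c p ∧ c p ≤ M := fun p => abs_le.mp (hM p)
  set S : Ω → ℝ := fun b => wsum n x (fun a => Real.exp (f0 a - c (a, b))) with hS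
  have Spos : ∀ b, 0 < S b := fun b => wsum_pos n hn x (fun a => Real.exp_pos _)
  have egb : ∀ b, Real.exp (g0 b) = (S b)⁻¹ := fun b => by
    rw [hg b, Real.exp_neg, Real.exp_log (Spos b)]
  set S' : Ω → ℝ := fun a => wsum m y (fun b => Real.exp (g0 b - c (a, b))) with hS'
  have S'pos : ∀ a, 0 < S' a := fun a => wsum_pos m hm y (fun b => Real.exp_pos _)
  have efa : ∀ a, Real.exp (f0 a) = (S' a)⁻¹ := fun a => by
    rw [hf a, Real.exp_neg, Real.exp_log (S'pos a)]
  have row : ∀ b, wsum n x (fun a => Real.exp (f0 a + g0 b - c (a, b))) = 1 := by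
    intro b
    have e1 : ∀ a, Real.exp (f0 a + g0 b - c (a, b))
        = Real.exp (g0 b) * Real.exp (f0 a - c (a, b)) := fun a => by
      rw [← Real.exp_add]; ring_nf
    rw [wsum_congr n x e1, wsum_mul_left, egb b]
    exact inv_mul_cancel₀ (Spos b).ne'
  have col : ∀ a, wsum m y (fun b => Real.exp (f0 a + g0 b - c (a, b))) = 1 := by
    intro a
    have e1 : ∀ b, Real.exp (f0 a + g0 b - c (a, b))
        = Real.exp (f0 a) * Real.exp (g0 b - c (a, b)) := fun b => by
      rw [← Real.exp_add]; ring_nf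
    rw [wsum_congr m y e1, wsum_mul_left, efa a]
    exact inv_mul_cancel₀ (S'pos a).ne'
  set A : ℝ := wsum n x (fun a => Real.exp (f0 a)) with hA
  have Apos : 0 < A := wsum_pos n hn x (fun a => Real.exp_pos _)
  have oscf : ∀ a a', Real.exp (f0 a) ≤ Real.exp (2 * M) * Real.exp (f0 a') := by
    intro a a'
    have hstep : ∀ b, Real.exp (g0 b - c (a', b))
        ≤ Real.exp (2 * M) * Real.exp (g0 b - c (a, b)) := fun b => by
      rw [← Real.exp_add]
      apply Real.exp_le_exp.mpr
      have h1 := hcb (a, b); have h2 := hcb (a', b)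
      linarith [h1.1, h1.2, h2.1, h2.2]
    have hstep2 : S' a' ≤ Real.exp (2 * M) * S' a := by
      calc S' a' ≤ wsum m y (fun b => Real.exp (2 * M) * Real.exp (g0 b - c (a, b))) :=
            wsum_mono m y hstep
        _ = Real.exp (2 * M) * S' a := wsum_mul_left m y _ _
    rw [efa a, efa a']
    have hkey : (1:ℝ) / S' a ≤ Real.exp (2 * M) / S' a' := by
      rw [div_le_div_iff₀ (S'pos a) (S'pos a')]
      nlinarith [hstep2]
    calc (S' a)⁻¹ = 1 / S' a := (one_div _).symm
      _ ≤ Real.exp (2 * M) / S' a' := hkey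
      _ = Real.exp (2 * M) * (S' a')⁻¹ := by rw [div_eq_mul_inv]
  have Abound : ∀ a, A ≤ Real.exp (2 * M) * Real.exp (f0 a) := by
    intro a
    calc A ≤ wsum n x (fun _ => Real.exp (2 * M) * Real.exp (f0 a)) :=
          wsum_mono n x (fun a' => oscf a' a)
      _ = Real.exp (2 * M) * Real.exp (f0 a) := wsum_const n hn x _
  refine ⟨hn, hm, Real.exp_pos _, hβ1, Real.exp_pos _, hβ1, row, col,
    ⟨fun a => A⁻¹ * Real.exp (f0 a), ?_, ?_, ?_⟩⟩
  · -- floor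
    intro a b
    have hSb : S b ≤ Real.exp M * A := by
      have hstep : ∀ a', Real.exp (f0 a' - c (a', b))
          ≤ Real.exp M * Real.exp (f0 a') := fun a' => by
        rw [← Real.exp_add]
        apply Real.exp_le_exp.mpr
        have h1 := hcb (a', b)
        linarith [h1.1]
      calc S b ≤ wsum n x (fun a' => Real.exp M * Real.exp (f0 a')) := wsum_mono n x hstep
        _ = Real.exp M * A := wsum_mul_left n x _ _
    have hSbinv : (Real.exp M * A)⁻¹ ≤ (S b)⁻¹ := by
      apply inv_anti₀ (Spos b) hSb
    have hcexp : Real.exp (-M) ≤ Real.exp (-c (a, b)) :=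
      Real.exp_le_exp.mpr (by linarith [(hcb (a, b)).2])
    have lhs_eq : Real.exp (-(2 * M)) * (A⁻¹ * Real.exp (f0 a))
        = Real.exp (f0 a) * ((Real.exp M * A)⁻¹ * Real.exp (-M)) := by
      rw [mul_inv, ← Real.exp_neg M]
      rw [show (-(2 * M) : ℝ) = -M + -M by ring, Real.exp_add]
      ring
    have rhs_eq : Real.exp (f0 a + g0 b - c (a, b))
        = Real.exp (f0 a) * ((S b)⁻¹ * Real.exp (-c (a, b))) := by
      rw [← egb b, ← Real.exp_add, ← Real.exp_add]
      ring_nf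
    rw [lhs_eq, rhs_eq]
    apply mul_le_mul_of_nonneg_left _ (Real.exp_pos (f0 a)).le
    exact mul_le_mul hSbinv hcexp (Real.exp_pos _).le (inv_pos.mpr (Spos b)).le
  · -- lower bound on φ
    intro a
    have h1 : (Real.exp (2 * M) * Real.exp (f0 a))⁻¹ ≤ A⁻¹ :=
      inv_anti₀ Apos (Abound a)
    have h2 : (Real.exp (2 * M) * Real.exp (f0 a))⁻¹ * Real.exp (f0 a)
        = Real.exp (-(2 * M)) := by
      rw [mul_inv, Real.exp_neg]
      field_simp
    calc Real.exp (-(2 * M)) = (Real.exp (2 * M) * Real.exp (f0 a))⁻¹ * Real.exp (f0 a) :=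
          h2.symm
      _ ≤ A⁻¹ * Real.exp (f0 a) :=
          mul_le_mul_of_nonneg_right h1 (Real.exp_pos _).le
  · -- normalization
    rw [wsum_mul_left]
    exact inv_mul_cancel₀ Apos.ne'

end EOTAux

open EOTAux

/-- **Truncated Neumann series approximation of the inverted empirical operators**
(Lemma 5.2): deterministically, for all sample sizes, truncation levels `N` and
shifts `κ`, with `δ(c) = 1 − exp(−3‖c‖_∞)`,
`‖Σ_{k=0}^N (A_{Qₘ}A_{Pₙ})^k (f + κ·1) − (I − A_{Qₘ}Ā_{Pₙ})⁻¹(f + κ·1)‖_{L²(Pₙ)}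
   ≤ δ(c)^{N+1}/(1−δ(c)) + N|κ|` for `f ∈ L²₀(Pₙ)` with `‖f‖ ≤ 1`, and
`‖Σ_{k=0}^N (A_{Pₙ}A_{Qₘ})^k (g + κ·1) − (I − Ā_{Pₙ}A_{Qₘ})⁻¹(g)‖_{L²(Qₘ)}
   ≤ δ(c)^{N+1}/(1−δ(c)) + (N+1)|κ|` for `g ∈ L²₀(Qₘ)` with `‖g‖ ≤ 1`. -/
theorem eot_neumann_truncation
    {Ω : Type*} [Nonempty Ω] [MeasurableSpace Ω] [TopologicalSpace Ω] [PolishSpace Ω]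
    [BorelSpace Ω]
    (c : Ω × Ω → ℝ) (hc_meas : Measurable c) (M : ℝ) (hc_bdd : ∀ p, |c p| ≤ M)
    (P Q : Measure Ω) [IsProbabilityMeasure P] [IsProbabilityMeasure Q]
    {Θ : Type*} [MeasurableSpace Θ] (Pr : Measure Θ) [IsProbabilityMeasure Pr]
    (X Y : ℕ → Θ → Ω)
    (hXmeas : ∀ i, Measurable (X i)) (hYmeas : ∀ j, Measurable (Y j))
    (hXlaw : ∀ i, Measure.map (X i) Pr = P) (hYlaw : ∀ j, Measure.map (Y j) Pr = Q)
    (hindep : iIndepFun (Sum.elim X Y) Pr)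
    (n m : ℕ → ℕ) (hn_pos : ∀ k, 0 < n k) (hm_pos : ∀ k, 0 < m k)
    -- empirical dual potentials, extended everywhere via the Schrödinger equations
    (fE gE : ℕ → Θ → Ω → ℝ)
    (hE : ∀ k θ, EOT.SchrodingerSystem c (EOT.empMeas X (n k) θ) (EOT.empMeas Y (m k) θ)
      (fE k θ) (gE k θ))
    (hE0 : ∀ k θ, ∫ y, gE k θ y ∂(EOT.empMeas Y (m k) θ) = 0) :
    ∀ (k : ℕ) (θ : Θ) (N : ℕ) (κ : ℝ) (Pn Qm : Measure Ω) (ξnm : Ω × Ω → ℝ),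
      Pn = EOT.empMeas X (n k) θ → Qm = EOT.empMeas Y (m k) θ →
      ξnm = EOT.eotDensity c (fE k θ) (gE k θ) →
      -- first bound, on `L²(Pₙ)`
      ((∀ f : Ω → ℝ, ∫ x, f x ∂Pn = 0 → EOT.l2norm Pn f ≤ 1 →
        ∀ u : Ω → ℝ,
          (∀ x, u x - EOT.opAQ Qm ξnm
              (fun y => EOT.opAP Pn ξnm u y
                - ∫ y', EOT.opAP Pn ξnm u y' ∂Qm) x
            = f x + κ) →
          EOT.l2norm Pn
            (fun x =>
              (∑ j ∈ Finset.range (N + 1),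
                ((fun h => EOT.opAQ Qm ξnm (EOT.opAP Pn ξnm h))^[j]
                  (fun x' => f x' + κ)) x)
              - u x)
          ≤ (1 - Real.exp (-(3 * ⨆ p : Ω × Ω, |c p|))) ^ (N + 1) /
              (1 - (1 - Real.exp (-(3 * ⨆ p : Ω × Ω, |c p|))))
            + (N : ℝ) * |κ|)
      ∧
      -- second bound, on `L²(Qₘ)`
      (∀ g : Ω → ℝ, ∫ y, g y ∂Qm = 0 → EOT.l2norm Qm g ≤ 1 →
        ∀ v : Ω → ℝ,
          (∀ y, v y - (EOT.opAP Pn ξnm (EOT.opAQ Qm ξnm v) y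
              - ∫ y', EOT.opAP Pn ξnm (EOT.opAQ Qm ξnm v) y' ∂Qm)
            = g y) →
          EOT.l2norm Qm
            (fun y =>
              (∑ j ∈ Finset.range (N + 1),
                ((fun h => EOT.opAP Pn ξnm (EOT.opAQ Qm ξnm h))^[j]
                  (fun y' => g y' + κ)) y)
              - v y)
          ≤ (1 - Real.exp (-(3 * ⨆ p : Ω × Ω, |c p|))) ^ (N + 1) /
              (1 - (1 - Real.exp (-(3 * ⨆ p : Ω × Ω, |c p|))))
            + ((N : ℝ) + 1) * |κ|)) := by
  intro k θ N κ Pn Qm ξnm hPn hQm hξ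
  subst hPn; subst hQm; subst hξ
  -- notation
  set nn := n k with hnn_def
  set mm := m k with hmm_def
  have hnn : 0 < nn := hn_pos k
  have hmm : 0 < mm := hm_pos k
  set xx : ℕ → Ω := fun i => X i θ with hxx_def
  set yy : ℕ → Ω := fun j => Y j θ with hyy_def
  set f0 : Ω → ℝ := fE k θ with hf0_def
  set g0 : Ω → ℝ := gE k θ with hg0_def
  set Ms := ⨆ p : Ω × Ω, |c p| with hMs_def
  have hMbdd : ∀ p : Ω × Ω, |c p| ≤ Ms := by
    intro p
    exact le_ciSup ⟨M, by rintro _ ⟨q, rfl⟩; exact hc_bdd q⟩ p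
  -- empirical integrals
  have hPint : ∀ h : Ω → ℝ, ∫ a, h a ∂(EOT.empMeas X nn θ) = wsum nn xx h := by
    intro h
    rw [EOT.empMeas]
    exact emp_integral nn xx h
  have hQint : ∀ h : Ω → ℝ, ∫ b, h b ∂(EOT.empMeas Y mm θ) = wsum mm yy h := by
    intro h
    rw [EOT.empMeas]
    exact emp_integral mm yy h
  -- Schrödinger system in sum form
  obtain ⟨hf, hg⟩ := hE k θ
  have hf' : ∀ a, f0 a = - Real.log (wsum mm yy (fun b => Real.exp (g0 b - c (a, b)))) := by
    intro a
    rw [hf0_def, hg0_def, hf a, ← hmm_def, hQint (fun b => Real.exp (gE k θ b - c (a, b)))]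
  have hg' : ∀ b, g0 b = - Real.log (wsum nn xx (fun a => Real.exp (f0 a - c (a, b)))) := by
    intro b
    rw [hg0_def, hf0_def, hg b, ← hnn_def, hPint (fun a => Real.exp (fE k θ a - c (a, b)))]
  set ξc : Ω → Ω → ℝ := fun a b => Real.exp (f0 a + g0 b - c (a, b)) with hξc_def
  set β : ℝ := Real.exp (-(2 * Ms)) with hβ_def
  have GP : Good nn mm xx yy ξc β β :=
    schrodinger_good c Ms hMbdd nn mm hnn hmm xx yy f0 g0 hf' hg'
  have GQ0 : Good mm nn yy xx (fun b a => Real.exp (g0 b + f0 a - c (a, b))) β β :=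
    schrodinger_good (fun p => c (p.2, p.1)) Ms (fun p => hMbdd (p.2, p.1))
      mm nn hmm hnn yy xx g0 f0 hg' hf'
  have GQ : Good mm nn yy xx (fun b a => ξc a b) β β := by
    have e : (fun (b a : Ω) => Real.exp (g0 b + f0 a - c (a, b)))
        = (fun (b a : Ω) => ξc a b) := by
      funext b a
      rw [hξc_def]
      ring_nf
    rw [← e]
    exact GQ0
  -- operator correspondences
  have hAP : ∀ h : Ω → ℝ,
      EOT.opAP (EOT.empMeas X nn θ) (EOT.eotDensity c f0 g0) h = kop nn xx ξc h :=
    fun h => funext fun b => hPint (fun a => ξc a b * h a)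
  have hAQ : ∀ h : Ω → ℝ,
      EOT.opAQ (EOT.empMeas Y mm θ) (EOT.eotDensity c f0 g0) h
        = kop mm yy (fun b a => ξc a b) h :=
    fun h => funext fun a => hQint (fun b => ξc a b * h b)
  have hl2P : ∀ h : Ω → ℝ, EOT.l2norm (EOT.empMeas X nn θ) h = l2 nn xx h := by
    intro h
    rw [EOT.l2norm, l2, hPint (fun a => h a ^ 2)]
  have hl2Q : ∀ h : Ω → ℝ, EOT.l2norm (EOT.empMeas Y mm θ) h = l2 mm yy h := by
    intro h
    rw [EOT.l2norm, l2, hQint (fun b => h b ^ 2)]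
  -- δ arithmetic
  have hMs0 : 0 ≤ Ms := le_trans (abs_nonneg _) (hMbdd (Classical.arbitrary _))
  set δ : ℝ := 1 - Real.exp (-(3 * Ms)) with hδ_def
  have hlamδ : 1 - (β * β + β) / 2 ≤ δ := by
    set a := Real.exp (-Ms) with ha_def
    have ha2 : a * a = β := by rw [hβ_def, ha_def, ← Real.exp_add]; congr 1; ring
    have ha3 : a * a * a = Real.exp (-(3 * Ms)) := by
      rw [ha_def, ← Real.exp_add, ← Real.exp_add]; congr 1; ring
    rw [hδ_def, ← ha3, ← ha2]
    nlinarith [sq_nonneg (a * a - a), Real.exp_pos (-Ms)]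
  have hδ1 : 0 < 1 - δ := by rw [hδ_def]; simp [Real.exp_pos]
  have hratio : (1 - (β * β + β) / 2) ^ (N + 1) / (1 - (1 - (β * β + β) / 2))
      ≤ δ ^ (N + 1) / (1 - δ) := by
    have h1 : (1 - (β * β + β) / 2) ^ (N + 1) ≤ δ ^ (N + 1) :=
      pow_le_pow_left₀ GP.lam_nonneg hlamδ _
    have hδ0 : 0 ≤ δ := le_trans GP.lam_nonneg hlamδ
    have h3 : 1 - δ ≤ 1 - (1 - (β * β + β) / 2) := by linarith
    exact div_le_div₀ (pow_nonneg hδ0 _) h1 hδ1 h3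
  constructor
  · -- P side
    intro f hfmean hfnorm u hu
    have hfm : wsum nn xx f = 0 := by rw [← hPint f]; exact hfmean
    have hfn : l2 nn xx f ≤ 1 := by rw [← hl2P f]; exact hfnorm
    have hTop : (fun h : Ω → ℝ =>
        EOT.opAQ (EOT.empMeas Y mm θ) (EOT.eotDensity c f0 g0)
          (EOT.opAP (EOT.empMeas X nn θ) (EOT.eotDensity c f0 g0) h))
        = Top nn mm xx yy ξc := by
      funext h
      rw [hAP h, hAQ (kop nn xx ξc h)]
      rfl
    -- the defining equation in sum form
    have hCu : (∫ y', EOT.opAP (EOT.empMeas X nn θ) (EOT.eotDensity c f0 g0) u y'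
        ∂(EOT.empMeas Y mm θ)) = wsum nn xx u := by
      rw [hAP u, hQint (kop nn xx ξc u)]
      exact mean_kop nn mm xx yy ξc GP.col u
    have hequ : ∀ a, u a - Top nn mm xx yy ξc u a + wsum nn xx u = f a + κ := by
      intro a
      have h1 := hu a
      rw [hCu, hAP u] at h1
      have h2 : EOT.opAQ (EOT.empMeas Y mm θ) (EOT.eotDensity c f0 g0)
          (fun b => kop nn xx ξc u b - wsum nn xx u) a
          = Top nn mm xx yy ξc u a - wsum nn xx u := by
        rw [hAQ (fun b => kop nn xx ξc u b - wsum nn xx u)]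
        rw [kop_sub mm yy (fun b a => ξc a b) (kop nn xx ξc u) (fun _ => wsum nn xx u) a]
        rw [kop_const mm yy (fun b a => ξc a b) (wsum nn xx u) a (GP.col a)]
        rfl
      rw [h2] at h1
      linarith
    have hmu : wsum nn xx u = κ := by
      have h1 : wsum nn xx (fun a => u a - Top nn mm xx yy ξc u a + wsum nn xx u)
          = wsum nn xx (fun a => f a + κ) :=
        wsum_congr nn xx hequ
      rw [wsum_add, wsum_sub, wsum_const nn hnn, wsum_add, wsum_const nn hnn,
        GP.mean_T u, hfm] at h1
      linarith
    have hwmean : wsum nn xx (fun a => u a - κ) = 0 := by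
      rw [wsum_sub, wsum_const nn hnn, hmu]
      ring
    have heqw : ∀ a, (fun a' => u a' - κ) a - Top nn mm xx yy ξc (fun a' => u a' - κ) a
        = f a := by
      intro a
      have h2 : Top nn mm xx yy ξc (fun a' => u a' - κ) a
          = Top nn mm xx yy ξc u a - κ := by
        have e : (fun a' => u a' - κ) = (fun a' => u a' + (-κ)) := by
          funext a'; ring
        rw [e, GP.T_addconst u (-κ) a]
        ring
      have h1 := hequ a
      rw [hmu] at h1
      simp only [h2]
      linarith
    have main := GP.assembly (fun a => u a - κ) f hwmean hfn heqw N κ κ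
    rw [hl2P, hTop]
    have hfun : ∀ a : Ω,
        (∑ j ∈ Finset.range (N + 1), (Top nn mm xx yy ξc)^[j] (fun x' => f x' + κ) a)
          - u a
        = (∑ j ∈ Finset.range (N + 1), (Top nn mm xx yy ξc)^[j] (fun a' => f a' + κ) a)
          - ((fun a' => u a' - κ) a + κ) := by
      intro a
      ring
    rw [l2_congr nn xx hfun]
    have habs : |((N : ℝ) + 1) * κ - κ| = (N : ℝ) * |κ| := by
      have e : ((N : ℝ) + 1) * κ - κ = (N : ℝ) * κ := by ring
      rw [e, abs_mul, Nat.abs_cast]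
    calc l2 nn xx (fun a =>
          (∑ j ∈ Finset.range (N + 1), (Top nn mm xx yy ξc)^[j] (fun a' => f a' + κ) a)
            - ((fun a' => u a' - κ) a + κ))
        ≤ (1 - (β * β + β) / 2) ^ (N + 1) / (1 - (1 - (β * β + β) / 2))
            + |((N : ℝ) + 1) * κ - κ| := main
      _ ≤ δ ^ (N + 1) / (1 - δ) + (N : ℝ) * |κ| := by rw [habs]; linarith [hratio]
  · -- Q side
    intro g hgmean hgnorm v hv
    have hgm : wsum mm yy g = 0 := by rw [← hQint g]; exact hgmean
    have hgn : l2 mm yy g ≤ 1 := by rw [← hl2Q g]; exact hgnorm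
    have hTop' : (fun h : Ω → ℝ =>
        EOT.opAP (EOT.empMeas X nn θ) (EOT.eotDensity c f0 g0)
          (EOT.opAQ (EOT.empMeas Y mm θ) (EOT.eotDensity c f0 g0) h))
        = Top mm nn yy xx (fun b a => ξc a b) := by
      funext h
      rw [hAQ h, hAP (kop mm yy (fun b a => ξc a b) h)]
      rfl
    -- the defining equation in sum form
    have hDv : (∫ y', EOT.opAP (EOT.empMeas X nn θ) (EOT.eotDensity c f0 g0)
        (EOT.opAQ (EOT.empMeas Y mm θ) (EOT.eotDensity c f0 g0) v) y'
        ∂(EOT.empMeas Y mm θ)) = wsum mm yy v := by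
      rw [hAQ v, hAP (kop mm yy (fun b a => ξc a b) v),
        hQint (kop nn xx ξc (kop mm yy (fun b a => ξc a b) v))]
      rw [mean_kop nn mm xx yy ξc GP.col (kop mm yy (fun b a => ξc a b) v)]
      exact mean_kop mm nn yy xx (fun b a => ξc a b) (fun b => GP.row b) v
    have heqv0 : ∀ b, v b - Top mm nn yy xx (fun b a => ξc a b) v b + wsum mm yy v
        = g b := by
      intro b
      have h1 := hv b
      rw [hDv, hAQ v, hAP (kop mm yy (fun b a => ξc a b) v)] at h1
      have h2 : kop nn xx ξc (kop mm yy (fun b a => ξc a b) v) b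
          = Top mm nn yy xx (fun b a => ξc a b) v b := rfl
      rw [h2] at h1
      linarith
    have hvmean : wsum mm yy v = 0 := by
      have h1 : wsum mm yy (fun b => v b - Top mm nn yy xx (fun b a => ξc a b) v b
          + wsum mm yy v) = wsum mm yy g := wsum_congr mm yy heqv0
      rw [wsum_add, wsum_sub, wsum_const mm hmm, GQ.mean_T v, hgm] at h1
      linarith
    have heqv : ∀ b, v b - Top mm nn yy xx (fun b a => ξc a b) v b = g b := by
      intro b
      have := heqv0 b
      rw [hvmean] at this
      linarith
    have main := GQ.assembly v g hvmean hgn heqv N κ 0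
    rw [hl2Q, hTop']
    have hfun : ∀ b : Ω,
        (∑ j ∈ Finset.range (N + 1),
          (Top mm nn yy xx (fun b a => ξc a b))^[j] (fun y' => g y' + κ) b) - v b
        = (∑ j ∈ Finset.range (N + 1),
          (Top mm nn yy xx (fun b a => ξc a b))^[j] (fun a' => g a' + κ) b)
          - (v b + 0) := by
      intro b
      ring
    rw [l2_congr mm yy hfun]
    have habs : |((N : ℝ) + 1) * κ - 0| = ((N : ℝ) + 1) * |κ| := by
      rw [sub_zero, abs_mul, abs_of_nonneg (by positivity : (0:ℝ) ≤ (N : ℝ) + 1)]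
    calc l2 mm yy (fun b =>
          (∑ j ∈ Finset.range (N + 1),
            (Top mm nn yy xx (fun b a => ξc a b))^[j] (fun a' => g a' + κ) b)
            - (v b + 0))
        ≤ (1 - (β * β + β) / 2) ^ (N + 1) / (1 - (1 - (β * β + β) / 2))
            + |((N : ℝ) + 1) * κ - 0| := main
      _ ≤ δ ^ (N + 1) / (1 - δ) + ((N : ℝ) + 1) * |κ| := by rw [habs]; linarith [hratio]
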